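/- Let a<b be reals, q > 1 a real number, and f ∈ C¹([a,b],ℝ) a function admitting a zero z ∈ [a,b] (i.e. f(z)=0). Then sup_{t∈[a,b]} |f(t)| ≤ q^{1/q} ( ∫_a^b |f(s)|^q ds + ∫_a^b |f'(s)|^q ds )^{1/q}. -/

import Mathlib

open MeasureTheory

private lemma hasDerivAt_abs_rpow' {q : ℝ} (hq : 1 < q) (x : ℝ) :
    HasDerivAt (fun y : ℝ => |y| ^ q) (q * |x| ^ (q - 2) * x) x := by
  have hq0 : q ≠ 0 := by positivity
  rcases lt_trichotomy x 0 with hx | hx | hx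
  · have hxne : -x ≠ 0 := neg_ne_zero.mpr (ne_of_lt hx)
    have h1 : HasDerivAt (fun y : ℝ => (-y) ^ q) (q * (-x) ^ (q - 1) * (-1)) x := by
      have := (Real.hasDerivAt_rpow_const (x := -x) (p := q) (Or.inl hxne)).comp x
        (hasDerivAt_neg x)
      simp only [mul_neg, mul_one] at this ⊢
      exact this
    have heq : (fun y : ℝ => |y| ^ q) =ᶠ[nhds x] fun y => (-y) ^ q := by
      filter_upwards [Iio_mem_nhds hx] with y hy
      rw [abs_of_neg hy]
    have h2 := h1.congr_of_eventuallyEq heq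
    refine h2.congr_deriv ?_
    rw [abs_of_neg hx, show q - 1 = (q - 2) + 1 by ring, Real.rpow_add_one hxne]
    ring
  · subst hx
    have h0 : q * |(0:ℝ)| ^ (q - 2) * 0 = 0 := by ring
    rw [h0, hasDerivAt_iff_tendsto_slope]
    have habs : ∀ y : ℝ, y ≠ 0 → ‖slope (fun y : ℝ => |y| ^ q) 0 y‖ = |y| ^ (q - 1) := by
      intro y hy
      have hay : (0:ℝ) < |y| := abs_pos.mpr hy
      rw [slope_def_field]
      simp only [div_eq_mul_inv, sub_zero, abs_zero, Real.zero_rpow hq0]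
      rw [Real.norm_eq_abs, abs_mul, abs_inv,
        abs_of_nonneg (Real.rpow_nonneg (abs_nonneg y) q),
        Real.rpow_sub hay, Real.rpow_one, div_eq_mul_inv]
    have hgt : Filter.Tendsto (fun y : ℝ => |y| ^ (q - 1)) (nhdsWithin 0 {(0:ℝ)}ᶜ) (nhds 0) := by
      have hc : Continuous (fun y : ℝ => |y| ^ (q - 1)) :=
        (Real.continuous_rpow_const (by linarith)).comp continuous_abs
      have := hc.continuousAt (x := (0:ℝ)).tendsto
      rw [show |(0:ℝ)| ^ (q - 1) = 0 by
        rw [abs_zero, Real.zero_rpow (by intro h; apply hq0; linarith [sub_eq_zero.mp h])]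
        ] at this
      exact this.mono_left nhdsWithin_le_nhds
    refine squeeze_zero_norm' ?_ hgt
    filter_upwards [self_mem_nhdsWithin] with y hy
    exact le_of_eq (habs y hy)
  · have hxne : x ≠ 0 := ne_of_gt hx
    have h1 : HasDerivAt (fun y : ℝ => y ^ q) (q * x ^ (q - 1)) x :=
      Real.hasDerivAt_rpow_const (Or.inl hxne)
    have heq : (fun y : ℝ => |y| ^ q) =ᶠ[nhds x] fun y => y ^ q := by
      filter_upwards [Ioi_mem_nhds hx] with y hy
      rw [abs_of_pos hy]
    have h2 := h1.congr_of_eventuallyEq heq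
    refine h2.congr_deriv ?_
    rw [abs_of_pos hx, show q - 1 = (q - 2) + 1 by ring, Real.rpow_add_one hxne]
    ring

private lemma continuous_D' {q : ℝ} (hq : 1 < q) :
    Continuous (fun x : ℝ => q * |x| ^ (q - 2) * x) := by
  have hq0 : (0:ℝ) < q := by linarith
  rw [continuous_iff_continuousAt]
  intro x
  rcases eq_or_ne x 0 with rfl | hx
  · have h0 : q * |(0:ℝ)| ^ ((q:ℝ) - 2) * 0 = 0 := by ring
    rw [ContinuousAt, h0]
    refine squeeze_zero_norm (a := fun y : ℝ => q * |y| ^ (q - 1)) ?_ ?_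
    · intro y
      rcases eq_or_ne y 0 with rfl | hy
      · simp [Real.zero_rpow (show q - 1 ≠ 0 by intro h; linarith [sub_eq_zero.mp h])]
      · have hay : (0:ℝ) < |y| := abs_pos.mpr hy
        rw [Real.norm_eq_abs, abs_mul, abs_mul, abs_of_pos hq0,
          abs_of_nonneg (Real.rpow_nonneg (abs_nonneg y) _),
          show q - 1 = (q - 2) + 1 by ring]
        rw [Real.rpow_add_one (ne_of_gt hay)]
        exact le_of_eq (by ring)
    · have hc : Continuous (fun y : ℝ => q * |y| ^ (q - 1)) :=
        continuous_const.mul ((Real.continuous_rpow_const (by linarith)).comp continuous_abs)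
      have := hc.continuousAt (x := (0:ℝ)).tendsto
      rw [show q * |(0:ℝ)| ^ (q - 1) = 0 by
        rw [abs_zero, Real.zero_rpow (show q - 1 ≠ 0 by intro h; linarith [sub_eq_zero.mp h])]
        ring] at this
      exact this
  · have h1 : ContinuousAt (fun y : ℝ => |y| ^ (q - 2)) x :=
      (Real.continuousAt_rpow_const |x| (q - 2) (Or.inl (abs_ne_zero.mpr hx))).comp
        continuous_abs.continuousAt
    exact (continuousAt_const.mul h1).mul continuousAt_id

/-- Sup-norm bound for a `C¹` function vanishing somewhere in `[a,b]`:
`sup_{[a,b]} |f| ≤ q^(1/q) (∫_a^b |f|^q + ∫_a^b |f'|^q)^(1/q)`. -/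
theorem statement18
    (a b : ℝ) (hab : a < b) (q : ℝ) (hq : 1 < q) (f f' : ℝ → ℝ)
    (hderiv : ∀ x ∈ Set.Icc a b, HasDerivWithinAt f (f' x) (Set.Icc a b) x)
    (hcont : ContinuousOn f' (Set.Icc a b))
    (hzero : ∃ z ∈ Set.Icc a b, f z = 0) :
    sSup ((fun t => |f t|) '' Set.Icc a b) ≤
      q ^ (1 / q) *
        ((∫ s in a..b, |f s| ^ q) + ∫ s in a..b, |f' s| ^ q) ^ (1 / q) := by
  obtain ⟨z, hz, hfz⟩ := hzero
  have hq0 : (0:ℝ) < q := by linarith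
  have hq0' : q ≠ 0 := ne_of_gt hq0
  set A := ∫ s in a..b, |f s| ^ q with hA
  set B := ∫ s in a..b, |f' s| ^ q with hB
  have hfab : ContinuousOn f (Set.Icc a b) := fun x hx => (hderiv x hx).continuousWithinAt
  have habsq : Continuous (fun y : ℝ => |y| ^ q) :=
    (Real.continuous_rpow_const hq0.le).comp continuous_abs
  have hIf : IntervalIntegrable (fun s => |f s| ^ q) volume a b :=
    (habsq.comp_continuousOn hfab).intervalIntegrable_of_Icc hab.le
  have hIf' : IntervalIntegrable (fun s => |f' s| ^ q) volume a b := by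
    refine ContinuousOn.intervalIntegrable_of_Icc hab.le ?_
    exact habsq.comp_continuousOn hcont
  have hA0 : 0 ≤ A :=
    intervalIntegral.integral_nonneg hab.le fun u _ => Real.rpow_nonneg (abs_nonneg _) q
  have hB0 : 0 ≤ B :=
    intervalIntegral.integral_nonneg hab.le fun u _ => Real.rpow_nonneg (abs_nonneg _) q
  have hAB0 : 0 ≤ A + B := by linarith
  -- the derivative of |f|^q
  set G : ℝ → ℝ := fun s => q * |f s| ^ (q - 2) * f s * f' s with hG
  have hGcont : ContinuousOn G (Set.Icc a b) :=
    ((continuous_D' hq).comp_continuousOn hfab).mul hcont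
  have hGabs : IntervalIntegrable (fun s => |G s|) volume a b :=
    hGcont.abs.intervalIntegrable_of_Icc hab.le
  -- pointwise bound on |G|
  have hGbound : ∀ y : ℝ, |G y| ≤ q * (|f y| ^ q + |f' y| ^ q) := by
    intro y
    have hR0 : 0 ≤ |f y| ^ q + |f' y| ^ q := by positivity
    rcases eq_or_ne (f y) 0 with hy | hy
    · simp only [hG, hy, abs_zero, mul_zero, zero_mul, abs_zero]
      positivity
    · have hay : (0:ℝ) < |f y| := abs_pos.mpr hy
      have hG1 : |G y| = q * (|f y| ^ (q - 1) * |f' y|) := by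
        simp only [hG, abs_mul, abs_of_pos hq0, abs_abs,
          abs_of_nonneg (Real.rpow_nonneg (abs_nonneg (f y)) _)]
        rw [show q - 1 = (q - 2) + 1 by ring, Real.rpow_add_one (ne_of_gt hay)]
        ring
      set p : ℝ := q / (q - 1) with hp
      have hq1 : (0:ℝ) < q - 1 := by linarith
      have hpq : p.HolderConjugate q := by
        rw [Real.holderConjugate_iff]
        constructor
        · rw [hp]; rw [lt_div_iff₀ hq1]; linarith
        · rw [hp]; field_simp; ring
      have hyoung := Real.young_inequality_of_nonneg
        (Real.rpow_nonneg (abs_nonneg (f y)) (q - 1)) (abs_nonneg (f' y)) hpq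
      have hap : (|f y| ^ (q - 1)) ^ p = |f y| ^ q := by
        rw [← Real.rpow_mul (abs_nonneg (f y))]
        congr 1
        rw [hp]; field_simp
      have h1p : 1 ≤ p := by rw [hp, le_div_iff₀ hq1]; linarith
      have h2 : (|f y| ^ (q - 1)) ^ p / p ≤ |f y| ^ q := by
        rw [hap]
        exact div_le_self (Real.rpow_nonneg (abs_nonneg _) _) h1p
      have h3 : |f' y| ^ q / q ≤ |f' y| ^ q :=
        div_le_self (Real.rpow_nonneg (abs_nonneg _) _) hq.le
      rw [hG1]
      have : |f y| ^ (q - 1) * |f' y| ≤ |f y| ^ q + |f' y| ^ q := by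
        calc |f y| ^ (q - 1) * |f' y| ≤ (|f y| ^ (q - 1)) ^ p / p + |f' y| ^ q / q := hyoung
          _ ≤ |f y| ^ q + |f' y| ^ q := add_le_add h2 h3
      exact mul_le_mul_of_nonneg_left this hq0.le
  -- FTC on ordered subintervals
  have hFTC : ∀ u v : ℝ, u ∈ Set.Icc a b → v ∈ Set.Icc a b → u ≤ v →
      ∫ y in u..v, G y = |f v| ^ q - |f u| ^ q := by
    intro u v hu hv huv
    have hsub : Set.Icc u v ⊆ Set.Icc a b := Set.Icc_subset_Icc hu.1 hv.2
    refine intervalIntegral.integral_eq_sub_of_hasDeriv_right_of_le huv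
      (habsq.comp_continuousOn (hfab.mono hsub)) ?_
      ((hGcont.mono hsub).intervalIntegrable_of_Icc huv)
    intro x hx
    have hxab : x ∈ Set.Ioo a b := ⟨lt_of_le_of_lt hu.1 hx.1, lt_of_lt_of_le hx.2 hv.2⟩
    have hfx : HasDerivAt f (f' x) x :=
      (hderiv x (Set.Ioo_subset_Icc_self hxab)).hasDerivAt (Icc_mem_nhds hxab.1 hxab.2)
    exact (((hasDerivAt_abs_rpow' hq (f x)).comp x hfx).hasDerivWithinAt)
  -- integral of |G| over subinterval is ≤ over [a,b]
  have hGmono : ∀ u v : ℝ, u ∈ Set.Icc a b → v ∈ Set.Icc a b → u ≤ v →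
      (∫ y in u..v, |G y|) ≤ ∫ y in a..b, |G y| := by
    intro u v hu hv huv
    refine intervalIntegral.integral_mono_interval hu.1 huv hv.2 ?_ hGabs
    filter_upwards with y using abs_nonneg _
  -- bound ∫ |G| over [a,b]
  have hGle : (∫ y in a..b, |G y|) ≤ q * (A + B) := by
    have hRint : IntervalIntegrable (fun y => q * (|f y| ^ q + |f' y| ^ q)) volume a b :=
      (hIf.add hIf').const_mul q
    have h1 : (∫ y in a..b, |G y|) ≤ ∫ y in a..b, q * (|f y| ^ q + |f' y| ^ q) :=
      intervalIntegral.integral_mono_on hab.le hGabs hRint fun x _ => hGbound x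
    have h2 : (∫ y in a..b, q * (|f y| ^ q + |f' y| ^ q)) = q * (A + B) := by
      rw [intervalIntegral.integral_const_mul, intervalIntegral.integral_add hIf hIf']
    linarith
  -- key pointwise bound
  have key : ∀ t ∈ Set.Icc a b, |f t| ^ q ≤ q * (A + B) := by
    intro t ht
    have hgz : |f z| ^ q = 0 := by rw [hfz, abs_zero, Real.zero_rpow hq0']
    rcases le_total z t with h | h
    · have hFT := hFTC z t hz ht h
      have : |f t| ^ q = ∫ y in z..t, G y := by rw [hFT, hgz]; ring
      calc |f t| ^ q = ∫ y in z..t, G y := this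
        _ ≤ |∫ y in z..t, G y| := le_abs_self _
        _ ≤ ∫ y in z..t, |G y| := intervalIntegral.abs_integral_le_integral_abs h
        _ ≤ ∫ y in a..b, |G y| := hGmono z t hz ht h
        _ ≤ q * (A + B) := hGle
    · have hFT := hFTC t z ht hz h
      have : |f t| ^ q = -∫ y in t..z, G y := by rw [hFT, hgz]; ring
      calc |f t| ^ q = -∫ y in t..z, G y := this
        _ ≤ |∫ y in t..z, G y| := neg_le_abs _
        _ ≤ ∫ y in t..z, |G y| := intervalIntegral.abs_integral_le_integral_abs h
        _ ≤ ∫ y in a..b, |G y| := hGmono t z ht hz h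
        _ ≤ q * (A + B) := hGle
  -- conclude
  have hM0 : 0 ≤ q ^ (1 / q) * (A + B) ^ (1 / q) :=
    mul_nonneg (Real.rpow_nonneg hq0.le _) (Real.rpow_nonneg hAB0 _)
  refine Real.sSup_le ?_ hM0
  rintro y ⟨t, ht, rfl⟩
  have h1 : |f t| ^ q ≤ q * (A + B) := key t ht
  have h2 : (|f t| ^ q) ^ (1 / q) ≤ (q * (A + B)) ^ (1 / q) :=
    Real.rpow_le_rpow (Real.rpow_nonneg (abs_nonneg _) q) h1 (by positivity)
  have h3 : (|f t| ^ q) ^ (1 / q) = |f t| := by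
    rw [← Real.rpow_mul (abs_nonneg _), mul_one_div_cancel hq0', Real.rpow_one]
  have h4 : (q * (A + B)) ^ (1 / q) = q ^ (1 / q) * (A + B) ^ (1 / q) :=
    Real.mul_rpow hq0.le hAB0
  rw [h3, h4] at h2
  exact h2
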